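/- Ring equilibria are constant states: if ρ* ∈ (0, ρmax)^N satisfies f1(ρᵢ₋₁*)f2(ρᵢ*) = f1(ρᵢ*)f2(ρᵢ₊₁*) for all i (cyclically), where f1(ρ) = ρ and f2(ρ) = ω(ρmax − ρ) with ω > 0, then all ρᵢ* are equal. -/

import Mathlib

open Fin.NatCast in
theorem ring_equilibria_constant
    (N : ℕ) (hN : 2 ≤ N) [NeZero N] (ω ρmax : ℝ) (hω : 0 < ω) (hρmax : 0 < ρmax)
    (ρ : Fin N → ℝ) (hpos : ∀ i, 0 < ρ i) (hlt : ∀ i, ρ i < ρmax)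
    (heq : ∀ i : Fin N, ρ (i - 1) * (ω * (ρmax - ρ i)) = ρ i * (ω * (ρmax - ρ (i + 1)))) :
    ∀ i j, ρ i = ρ j := by
  obtain ⟨i0, -, hi0⟩ := Finset.exists_max_image Finset.univ ρ ⟨0, Finset.mem_univ 0⟩
  have hi0' : ∀ j, ρ j ≤ ρ i0 := fun j => hi0 j (Finset.mem_univ j)
  -- key step: if ρ i is the max, then ρ (i+1) is too
  have key : ∀ i : Fin N, ρ i = ρ i0 → ρ (i + 1) = ρ i0 := by
    intro i hi
    have h1 : ρ (i - 1) ≤ ρ i := hi ▸ hi0' (i - 1)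
    have h2 : ρ (i + 1) ≤ ρ i := hi ▸ hi0' (i + 1)
    have h3 := heq i
    have h4 : 0 < ρ i := hpos i
    have h5 : ρ i < ρmax := hlt i
    have h3' : ρ (i - 1) * (ρmax - ρ i) = ρ i * (ρmax - ρ (i + 1)) :=
      mul_left_cancel₀ (ne_of_gt hω) (by ring_nf; ring_nf at h3; linarith)
    have : ρ i ≤ ρ (i + 1) := by
      nlinarith [mul_le_mul_of_nonneg_right h1 (le_of_lt (sub_pos.mpr h5))]
    linarith [hi ▸ hi0' (i + 1)]
  have claim : ∀ n : ℕ, ρ (i0 + (n : Fin N)) = ρ i0 := by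
    intro n
    induction n with
    | zero => simp
    | succ n ih =>
        have : ((n + 1 : ℕ) : Fin N) = (n : Fin N) + 1 := by push_cast; ring
        rw [this, ← add_assoc]
        exact key _ ih
  have hall : ∀ j, ρ j = ρ i0 := by
    intro j
    have : i0 + ((j - i0).val : Fin N) = j := by
      rw [Fin.cast_val_eq_self]; abel
    calc ρ j = ρ (i0 + ((j - i0).val : Fin N)) := by rw [this]
    _ = ρ i0 := claim _
  intro i j
  rw [hall i, hall j]
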